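/- Let z(ε, τ) = e^{−(3/4)ετ}·cos(τ − ετ²/4), let p(τ) = (3/4)τ² − 15/16, and for fixed real τ define the modified residual R(ε) = (1 + ετ + ε²·p(τ))·z'' + 2·(ε + (3/2)·ε²·τ)·z' + z (derivatives with respect to τ). Then, as a function of ε, R(0) = 0, R'(0) = 0, and R''(0) = −(3/2)·τ·sin(τ); i.e. the ε²-Taylor coefficient of the modified residual is −(3/4)·τ·sin(τ), which grows only linearly in τ rather than quadratically. -/

import Mathlib

open Real

/-- Renormalization-group solution of the lengthening pendulum. -/
noncomputable def zRenorm (ε : ℝ) : ℝ → ℝ := fun τ =>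
  Real.exp (-(3/4)*ε*τ) * Real.cos (τ - ε*τ^2/4)

/-- First τ-derivative of `zRenorm ε`. -/
noncomputable def zD1 (ε τ : ℝ) : ℝ :=
  Real.exp (-(3/4)*ε*τ) *
    (-(3/4)*ε * Real.cos (τ - ε*τ^2/4) - (1 - ε*τ/2) * Real.sin (τ - ε*τ^2/4))

/-- Second τ-derivative of `zRenorm ε`. -/
noncomputable def zD2 (ε τ : ℝ) : ℝ :=
  Real.exp (-(3/4)*ε*τ) *
    (((9/16)*ε^2 - (1 - ε*τ/2)^2) * Real.cos (τ - ε*τ^2/4)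
      + ((3/2)*ε*(1 - ε*τ/2) + ε/2) * Real.sin (τ - ε*τ^2/4))

lemma hasDerivAt_z (ε τ : ℝ) : HasDerivAt (zRenorm ε) (zD1 ε τ) τ := by
  have hu : HasDerivAt (fun t : ℝ => -(3/4)*ε*t) (-(3/4)*ε) τ := by
    simpa using (hasDerivAt_id τ).const_mul (-(3/4)*ε)
  have hv : HasDerivAt (fun t : ℝ => t - ε*t^2/4) (1 - ε*τ/2) τ := by
    have h1 : HasDerivAt (fun t : ℝ => ε*t^2/4) (ε*(2*τ)/4) τ := by
      simpa [mul_comm, mul_assoc, mul_left_comm] using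
        ((hasDerivAt_pow 2 τ).const_mul ε).div_const 4
    have := (hasDerivAt_id τ).sub h1
    exact this.congr_deriv (by ring)
  have := (hu.exp.mul hv.cos)
  unfold zRenorm zD1
  exact this.congr_deriv (by ring)

lemma hasDerivAt_zD1 (ε τ : ℝ) : HasDerivAt (fun t => zD1 ε t) (zD2 ε τ) τ := by
  have hu : HasDerivAt (fun t : ℝ => -(3/4)*ε*t) (-(3/4)*ε) τ := by
    simpa using (hasDerivAt_id τ).const_mul (-(3/4)*ε)
  have hv : HasDerivAt (fun t : ℝ => t - ε*t^2/4) (1 - ε*τ/2) τ := by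
    have h1 : HasDerivAt (fun t : ℝ => ε*t^2/4) (ε*(2*τ)/4) τ := by
      simpa [mul_comm, mul_assoc, mul_left_comm] using
        ((hasDerivAt_pow 2 τ).const_mul ε).div_const 4
    have := (hasDerivAt_id τ).sub h1
    exact this.congr_deriv (by ring)
  have hm : HasDerivAt (fun t : ℝ => 1 - ε*t/2) (-(ε/2)) τ := by
    have : HasDerivAt (fun t : ℝ => ε*t/2) (ε/2) τ := by
      simpa [mul_comm] using ((hasDerivAt_id τ).const_mul ε).div_const 2
    exact ((hasDerivAt_const τ (1:ℝ)).sub this).congr_deriv (by ring)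
  have hw : HasDerivAt
      (fun t : ℝ => -(3/4)*ε * Real.cos (t - ε*t^2/4) - (1 - ε*t/2) * Real.sin (t - ε*t^2/4))
      (-(3/4)*ε * (-Real.sin (τ - ε*τ^2/4) * (1 - ε*τ/2))
        - ((-(ε/2)) * Real.sin (τ - ε*τ^2/4)
            + (1 - ε*τ/2) * (Real.cos (τ - ε*τ^2/4) * (1 - ε*τ/2)))) τ :=
    ((hv.cos.const_mul (-(3/4)*ε))).sub (hm.mul hv.sin)
  have := hu.exp.mul hw
  unfold zD1 zD2
  exact this.congr_deriv (by ring)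

/-- Generic ε-derivative for expressions of the shape
`exp(-(3/4)ετ) (f ε cos(τ-ετ²/4) + g ε sin(τ-ετ²/4))`. -/
lemma hasDerivAt_shape (τ : ℝ) (f g : ℝ → ℝ) (f' g' ε : ℝ)
    (hf : HasDerivAt f f' ε) (hg : HasDerivAt g g' ε) :
    HasDerivAt
      (fun e => Real.exp (-(3/4)*e*τ) * (f e * Real.cos (τ - e*τ^2/4)
        + g e * Real.sin (τ - e*τ^2/4)))
      (Real.exp (-(3/4)*ε*τ) *
        ((-(3/4)*τ * f ε + f' - τ^2/4 * g ε) * Real.cos (τ - ε*τ^2/4)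
          + (-(3/4)*τ * g ε + g' + τ^2/4 * f ε) * Real.sin (τ - ε*τ^2/4))) ε := by
  have hu : HasDerivAt (fun e : ℝ => -(3/4)*e*τ) (-(3/4)*τ) ε := by
    have := ((hasDerivAt_id ε).const_mul (-(3/4))).mul_const τ
    exact this.congr_deriv (by ring)
  have hv : HasDerivAt (fun e : ℝ => τ - e*τ^2/4) (-(τ^2/4)) ε := by
    have h1 : HasDerivAt (fun e : ℝ => e*τ^2/4) (τ^2/4) ε := by
      simpa [mul_comm] using ((hasDerivAt_id ε).mul_const (τ^2)).div_const 4
    exact ((hasDerivAt_const ε τ).sub h1).congr_deriv (by ring)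
  have hin : HasDerivAt
      (fun e => f e * Real.cos (τ - e*τ^2/4) + g e * Real.sin (τ - e*τ^2/4))
      (f' * Real.cos (τ - ε*τ^2/4) + f ε * (-Real.sin (τ - ε*τ^2/4) * (-(τ^2/4)))
        + (g' * Real.sin (τ - ε*τ^2/4) + g ε * (Real.cos (τ - ε*τ^2/4) * (-(τ^2/4))))) ε :=
    (hf.mul hv.cos).add (hg.mul hv.sin)
  have := hu.exp.mul hin
  exact this.congr_deriv (by ring)

theorem stmt16 (τ : ℝ) :
    let p : ℝ → ℝ := fun s => (3/4)*s^2 - 15/16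
    let R : ℝ → ℝ := fun ε =>
      (1 + ε*τ + ε^2 * p τ) * deriv (deriv (zRenorm ε)) τ
        + 2*(ε + (3/2)*ε^2*τ) * deriv (zRenorm ε) τ + zRenorm ε τ
    R 0 = 0 ∧ deriv R 0 = 0 ∧ deriv (deriv R) 0 = -(3/2) * τ * Real.sin τ := by
  intro p R
  -- coefficient polynomials
  set k3 : ℝ := τ^3/2 - 21*τ/8 with hk3
  set k4 : ℝ := ((3/4)*τ^2 - 15/16) * (9/16 - τ^2/4) with hk4
  set q2 : ℝ := -(3/4)*τ with hq2
  set q3 : ℝ := (9/4)*τ^2 - 15/8 with hq3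
  set q4 : ℝ := -(3/4)*τ*((3/4)*τ^2 - 15/16) with hq4
  set P : ℝ → ℝ := fun e => k3*e^3 + k4*e^4 with hP
  set Q : ℝ → ℝ := fun e => q2*e^2 + q3*e^3 + q4*e^4 with hQ
  set Pd : ℝ → ℝ := fun e => 3*k3*e^2 + 4*k4*e^3 with hPd
  set Qd : ℝ → ℝ := fun e => 2*q2*e + 3*q3*e^2 + 4*q4*e^3 with hQd
  have hPder : ∀ e : ℝ, HasDerivAt P (Pd e) e := by
    intro e
    have := ((hasDerivAt_pow 3 e).const_mul k3).add ((hasDerivAt_pow 4 e).const_mul k4)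
    exact this.congr_deriv (by push_cast; ring)
  have hQder : ∀ e : ℝ, HasDerivAt Q (Qd e) e := by
    intro e
    have := (((hasDerivAt_pow 2 e).const_mul q2).add ((hasDerivAt_pow 3 e).const_mul q3)).add
      ((hasDerivAt_pow 4 e).const_mul q4)
    exact this.congr_deriv (by push_cast; ring)
  -- R in closed form
  have hRform : R = fun e => Real.exp (-(3/4)*e*τ) * (P e * Real.cos (τ - e*τ^2/4)
      + Q e * Real.sin (τ - e*τ^2/4)) := by
    funext e
    have h1 : deriv (zRenorm e) = fun t => zD1 e t := by
      funext t; exact (hasDerivAt_z e t).deriv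
    have h2 : deriv (deriv (zRenorm e)) τ = zD2 e τ := by
      rw [h1]; exact (hasDerivAt_zD1 e τ).deriv
    show (1 + e*τ + e^2 * p τ) * deriv (deriv (zRenorm e)) τ
        + 2*(e + (3/2)*e^2*τ) * deriv (zRenorm e) τ + zRenorm e τ = _
    rw [h2, h1]
    simp only [hP, hQ, hk3, hk4, hq2, hq3, hq4]
    unfold zD1 zD2 zRenorm
    show _ = Real.exp (-(3/4)*e*τ) * _
    ring
  -- first ε-derivative of R
  set P1 : ℝ → ℝ := fun e => -(3/4)*τ * P e + Pd e - τ^2/4 * Q e with hP1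
  set Q1 : ℝ → ℝ := fun e => -(3/4)*τ * Q e + Qd e + τ^2/4 * P e with hQ1
  have hRder : ∀ e : ℝ, HasDerivAt R
      (Real.exp (-(3/4)*e*τ) * (P1 e * Real.cos (τ - e*τ^2/4)
        + Q1 e * Real.sin (τ - e*τ^2/4))) e := by
    intro e
    rw [hRform]
    exact hasDerivAt_shape τ P Q (Pd e) (Qd e) e (hPder e) (hQder e)
  have hRd : deriv R = fun e => Real.exp (-(3/4)*e*τ) * (P1 e * Real.cos (τ - e*τ^2/4)
      + Q1 e * Real.sin (τ - e*τ^2/4)) := by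
    funext e; exact (hRder e).deriv
  -- second ε-derivative
  set Pd1 : ℝ → ℝ := fun e => -(3/4)*τ * Pd e + (6*k3*e + 12*k4*e^2) - τ^2/4 * Qd e with hPd1
  set Qd1 : ℝ → ℝ := fun e => -(3/4)*τ * Qd e + (2*q2 + 6*q3*e + 12*q4*e^2) + τ^2/4 * Pd e with hQd1
  have hPdd : ∀ e : ℝ, HasDerivAt Pd (6*k3*e + 12*k4*e^2) e := by
    intro e
    have := ((hasDerivAt_pow 2 e).const_mul (3*k3)).add ((hasDerivAt_pow 3 e).const_mul (4*k4))
    exact this.congr_deriv (by push_cast; ring)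
  have hQdd : ∀ e : ℝ, HasDerivAt Qd (2*q2 + 6*q3*e + 12*q4*e^2) e := by
    intro e
    have := ((((hasDerivAt_id e).const_mul (2*q2)).add
      ((hasDerivAt_pow 2 e).const_mul (3*q3))).add ((hasDerivAt_pow 3 e).const_mul (4*q4)))
    exact this.congr_deriv (by push_cast; ring)
  have hP1der : ∀ e : ℝ, HasDerivAt P1 (Pd1 e) e := by
    intro e
    exact (((hPder e).const_mul (-(3/4)*τ)).add (hPdd e)).sub ((hQder e).const_mul (τ^2/4))
  have hQ1der : ∀ e : ℝ, HasDerivAt Q1 (Qd1 e) e := by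
    intro e
    exact (((hQder e).const_mul (-(3/4)*τ)).add (hQdd e)).add ((hPder e).const_mul (τ^2/4))
  set P2 : ℝ → ℝ := fun e => -(3/4)*τ * P1 e + Pd1 e - τ^2/4 * Q1 e with hP2
  set Q2 : ℝ → ℝ := fun e => -(3/4)*τ * Q1 e + Qd1 e + τ^2/4 * P1 e with hQ2
  have hRdd : ∀ e : ℝ, HasDerivAt (deriv R)
      (Real.exp (-(3/4)*e*τ) * (P2 e * Real.cos (τ - e*τ^2/4)
        + Q2 e * Real.sin (τ - e*τ^2/4))) e := by
    intro e
    rw [hRd]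
    exact hasDerivAt_shape τ P1 Q1 (Pd1 e) (Qd1 e) e (hP1der e) (hQ1der e)
  refine ⟨?_, ?_, ?_⟩
  · rw [hRform]
    simp [hP, hQ]
  · rw [hRd]
    simp [hP1, hQ1, hP, hQ, hPd, hQd]
  · rw [(hRdd 0).deriv]
    simp only [hP2, hQ2, hP1, hQ1, hPd1, hQd1, hP, hQ, hPd, hQd, hq2]
    norm_num
    left; ring
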